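/- arXiv:1406.6983 — 7 statements merged into one kernel-verified Lean document; each statement's English description precedes it below -/
import Mathlib

section
/- Let Ω ⊂ ℝⁿ be an open convex domain containing the origin and let h : ℝⁿ → ℝ be a supporting functional for Ω (i.e., h(a) = 1 for some a ∈ ∂Ω and h(x) < 1 for all x ∈ Ω). Then for all x, y ∈ Ω with h(x) ≠ h(y), F_Ω(x,y) ≥ log((1−h(x))/(1−h(y))). -/
open Real Set
open scoped Classical

/-- The Funk weak metric on a domain `Ω ⊆ ℝⁿ`: if the ray from `x` through `y`
meets the boundary `∂Ω` at a point `a = x + t • (y - x)` with `t ≥ 1`, then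
`F_Ω(x,y) = log (|x - a| / |y - a|)`; otherwise (in particular if the ray is
contained in `Ω`, or if `x = y`) it is `0`. -/
noncomputable def funk {n : ℕ} (Ω : Set (EuclideanSpace ℝ (Fin n)))
    (x y : EuclideanSpace ℝ (Fin n)) : ℝ :=
  if h : ∃ t : ℝ, 1 ≤ t ∧ x + t • (y - x) ∈ frontier Ω then
    Real.log (dist x (x + h.choose • (y - x)) / dist y (x + h.choose • (y - x)))
  else 0

theorem funk_ge_log_supporting_functional {n : ℕ} (Ω : Set (EuclideanSpace ℝ (Fin n)))
    (hopen : IsOpen Ω) (hconv : Convex ℝ Ω) (h0 : (0 : EuclideanSpace ℝ (Fin n)) ∈ Ω)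
    (h : EuclideanSpace ℝ (Fin n) →ₗ[ℝ] ℝ)
    (hsupp : ∃ a ∈ frontier Ω, h a = 1) (hlt : ∀ z ∈ Ω, h z < 1)
    (x y : EuclideanSpace ℝ (Fin n)) (hx : x ∈ Ω) (hy : y ∈ Ω) (hne' : h x ≠ h y) :
    Real.log ((1 - h x) / (1 - h y)) ≤ funk Ω x y := by
  have hxlt : h x < 1 := hlt x hx
  have hylt : h y < 1 := hlt y hy
  have hcont : Continuous h := h.continuous_of_finiteDimensional
  have hnhds : Ω ∈ nhds (0 : EuclideanSpace ℝ (Fin n)) := hopen.mem_nhds h0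
  rw [funk]
  split_ifs with hex
  · -- boundary point exists
    obtain ⟨ht1, hta⟩ := hex.choose_spec
    set t := hex.choose with htdef
    set a := x + t • (y - x) with hadef
    have hxy : x ≠ y := fun e => hne' (by rw [e])
    have hanotin : a ∉ Ω := fun ha => (hopen.inter_frontier_eq ▸ Set.mem_inter ha hta :
      a ∈ (∅ : Set (EuclideanSpace ℝ (Fin n))))
    have ht1' : 1 < t := by
      rcases lt_or_eq_of_le ht1 with h' | h'
      · exact h'
      · exfalso; apply hanotin; rw [hadef, ← h', one_smul]; simpa using hy
    -- h a ≤ 1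
    have hclos : a ∈ closure Ω := hta.1
    have hha : h a ≤ 1 := by
      have : closure Ω ⊆ {z | h z ≤ 1} :=
        closure_minimal (fun z hz => (hlt z hz).le) (isClosed_le hcont continuous_const)
      exact this hclos
    have hha' : h x + t * (h y - h x) ≤ 1 := by
      have : h a = h x + t * (h y - h x) := by
        rw [hadef]; simp [map_add, map_smul, map_sub, smul_eq_mul]
      linarith [this ▸ hha]
    have hnorm : (0:ℝ) < ‖y - x‖ := by
      rw [norm_pos_iff]; exact sub_ne_zero_of_ne (Ne.symm hxy)
    have hd1 : dist x a = t * ‖y - x‖ := by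
      rw [hadef, dist_eq_norm]
      have : x - (x + t • (y - x)) = -(t • (y - x)) := by abel
      rw [this, norm_neg, norm_smul, Real.norm_eq_abs, abs_of_pos (by linarith)]
    have hd2 : dist y a = (t - 1) * ‖y - x‖ := by
      rw [hadef, dist_eq_norm]
      have : y - (x + t • (y - x)) = -((t - 1) • (y - x)) := by
        rw [sub_smul, one_smul]; abel
      rw [this, norm_neg, norm_smul, Real.norm_eq_abs, abs_of_pos (by linarith)]
    rw [hd1, hd2]
    have hratio : dist x a / dist y a = t / (t - 1) := by
      rw [hd1, hd2, mul_div_mul_right _ _ (ne_of_gt hnorm)]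
    rw [mul_div_mul_right _ _ (ne_of_gt hnorm)]
    apply Real.log_le_log (div_pos (by linarith) (by linarith))
    rw [div_le_div_iff₀ (by linarith) (by linarith)]
    nlinarith
  · -- no boundary point: show RHS log ≤ 0, i.e. h y < h x
    have hyx : h y < h x := by
      by_contra hcon
      push_neg at hcon
      have hlt' : h x < h y := lt_of_le_of_ne hcon hne'
      set T := (1 - h x) / (h y - h x) with hT
      have hd : 0 < h y - h x := by linarith
      have hT1 : 1 ≤ T := by
        rw [le_div_iff₀ hd]; linarith
      -- gauge argument
      have hg : Continuous fun t : ℝ => gauge Ω (x + t • (y - x)) := by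
        exact (continuous_gauge hconv hnhds).comp (by continuity)
      have hg1 : gauge Ω (x + (1:ℝ) • (y - x)) < 1 := by
        rw [one_smul]
        have : x + (y - x) = y := by abel
        rw [this]
        exact gauge_lt_one_of_mem_of_isOpen hopen hy
      have hgT : 1 ≤ gauge Ω (x + T • (y - x)) := by
        by_contra hc
        push_neg at hc
        rw [gauge_lt_one_iff_mem_interior hconv hnhds, hopen.interior_eq] at hc
        have : h (x + T • (y - x)) = 1 := by
          simp only [map_add, map_smul, map_sub, smul_eq_mul]
          rw [hT, div_mul_cancel₀ _ (ne_of_gt hd)]; ring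
        linarith [hlt _ hc]
      have := intermediate_value_Icc hT1 hg.continuousOn
      have h1mem : (1:ℝ) ∈ Icc (gauge Ω (x + (1:ℝ) • (y - x))) (gauge Ω (x + T • (y - x))) :=
        ⟨hg1.le, hgT⟩
      obtain ⟨t, htIcc, htg⟩ := this h1mem
      exact hex ⟨t, htIcc.1, (gauge_eq_one_iff_mem_frontier hconv hnhds).mp htg⟩
    apply Real.log_nonpos (div_nonneg (by linarith) (by linarith))
    rw [div_le_one (by linarith)]
    linarith
end

section
/- For a bounded open convex domain Ω ⊂ ℝⁿ containing the origin, the Funk metric satisfies F_Ω(x,y) = sup over supporting functionals h of log((1−h(x))/(1−h(y))). -/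
open Real
open scoped Classical

theorem funk_eq_sup_supporting_functionals {n : ℕ} (Ω : Set (EuclideanSpace ℝ (Fin n)))
    (hopen : IsOpen Ω) (hconv : Convex ℝ Ω) (h0 : (0 : EuclideanSpace ℝ (Fin n)) ∈ Ω)
    (hbdd : Bornology.IsBounded Ω)
    (x y : EuclideanSpace ℝ (Fin n)) (hx : x ∈ Ω) (hy : y ∈ Ω) :
    funk Ω x y = sSup {r : ℝ | ∃ h : EuclideanSpace ℝ (Fin n) →ₗ[ℝ] ℝ,
      (∀ z ∈ Ω, h z < 1) ∧ (∃ a ∈ frontier Ω, h a = 1) ∧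
      r = Real.log ((1 - h x) / (1 - h y))} := by
  have hfrΩ : ∀ z ∈ frontier Ω, z ∉ Ω := by
    intro z hz hzΩ
    rw [← hopen.interior_eq] at hzΩ
    exact hz.2 hzΩ
  by_cases hxy : x = y
  · -- degenerate case `x = y`: both sides are `0`
    subst hxy
    have hno : ¬ ∃ t : ℝ, 1 ≤ t ∧ x + t • (x - x) ∈ frontier Ω := by
      rintro ⟨t, -, hm⟩
      simp only [sub_self, smul_zero, add_zero] at hm
      exact hfrΩ x hm hx
    rw [funk, dif_neg hno]
    have hzero : ∀ r ∈ {r : ℝ | ∃ h : EuclideanSpace ℝ (Fin n) →ₗ[ℝ] ℝ,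
        (∀ z ∈ Ω, h z < 1) ∧ (∃ a ∈ frontier Ω, h a = 1) ∧
        r = Real.log ((1 - h x) / (1 - h x))}, r = 0 := by
      rintro r ⟨h, hlt, -, rfl⟩
      have : (1 : ℝ) - h x ≠ 0 := by have := hlt x hx; linarith
      rw [div_self this, Real.log_one]
    refine le_antisymm ?_ (Real.sSup_le (fun r hr => (hzero r hr).le) le_rfl)
    rcases Set.eq_empty_or_nonempty {r : ℝ | ∃ h : EuclideanSpace ℝ (Fin n) →ₗ[ℝ] ℝ,
        (∀ z ∈ Ω, h z < 1) ∧ (∃ a ∈ frontier Ω, h a = 1) ∧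
        r = Real.log ((1 - h x) / (1 - h x))} with he | hne
    · rw [he, Real.sSup_empty]
    · obtain ⟨r, hr⟩ := hne
      exact (hzero r hr) ▸ le_csSup ⟨0, fun s hs => (hzero s hs).le⟩ hr
  · -- main case
    set c : EuclideanSpace ℝ (Fin n) := y - x with hc_def
    have hc : c ≠ 0 := sub_ne_zero.2 (Ne.symm hxy)
    have hcnorm : (0 : ℝ) < ‖c‖ := norm_pos_iff.2 hc
    set S : Set ℝ := {t : ℝ | x + t • c ∈ Ω} with hS_def
    have hcontf : Continuous (fun t : ℝ => x + t • c) := by continuity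
    have hSopen : IsOpen S := hopen.preimage hcontf
    have hS1 : (1 : ℝ) ∈ S := by
      simp only [hS_def, Set.mem_setOf_eq, one_smul, hc_def]
      simpa using hy
    obtain ⟨R, hR⟩ := hbdd.subset_closedBall 0
    have hSbdd : BddAbove S := by
      refine ⟨(R + ‖x‖) / ‖c‖, fun t ht => ?_⟩
      have h1 : ‖x + t • c‖ ≤ R := by
        have := hR ht
        simpa [Metric.mem_closedBall, dist_eq_norm] using this
      have h2 : |t| * ‖c‖ ≤ R + ‖x‖ := by
        have : ‖t • c‖ ≤ ‖x + t • c‖ + ‖x‖ := by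
          have := norm_sub_le (x + t • c) x
          simpa using this
        rw [norm_smul, Real.norm_eq_abs] at this
        linarith
      have ht' : t ≤ (R + ‖x‖) / ‖c‖ := by
        rw [le_div_iff₀ hcnorm]
        calc t * ‖c‖ ≤ |t| * ‖c‖ := by
              have : t ≤ |t| := le_abs_self t
              nlinarith
          _ ≤ R + ‖x‖ := h2
      exact ht'
    set t₀ : ℝ := sSup S with ht₀_def
    have ht₀gt : 1 < t₀ := by
      obtain ⟨ε, hε, hball⟩ := Metric.isOpen_iff.1 hSopen 1 hS1
      have : (1 + ε / 2) ∈ S := hball (by simp [Real.dist_eq, abs_of_nonneg, hε.le]; linarith)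
      have := le_csSup hSbdd this
      linarith
    have ht₀pos : 0 < t₀ := by linarith
    have hnotΩ : x + t₀ • c ∉ Ω := by
      intro hmem
      obtain ⟨ε, hε, hball⟩ := Metric.isOpen_iff.1 hSopen t₀ hmem
      have : (t₀ + ε / 2) ∈ S := hball (by simp [Real.dist_eq, abs_of_nonneg, hε.le]; linarith)
      have := le_csSup hSbdd this
      linarith
    have hfront : x + t₀ • c ∈ frontier Ω := by
      constructor
      · have h1 : t₀ ∈ closure S := csSup_mem_closure ⟨1, hS1⟩ hSbdd
        have h2 : (fun t : ℝ => x + t • c) '' closure S ⊆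
            closure ((fun t : ℝ => x + t • c) '' S) :=
          image_closure_subset_closure_image hcontf
        have h3 : (fun t : ℝ => x + t • c) '' S ⊆ Ω := by
          rintro _ ⟨t, ht, rfl⟩; exact ht
        exact closure_mono h3 (h2 ⟨t₀, h1, rfl⟩)
      · rw [hopen.interior_eq]; exact hnotΩ
    -- uniqueness of the boundary parameter
    have hlt_absurd : ∀ s t : ℝ, 1 ≤ s → s < t → x + s • c ∈ frontier Ω →
        x + t • c ∈ frontier Ω → False := by
      intro s t hs hst hsf htf
      have htpos : 0 < t := by linarith
      have hmemseg : x + s • c ∈ openSegment ℝ x (x + t • c) := by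
        rw [openSegment_eq_image']
        refine ⟨s / t, ⟨by positivity, (div_lt_one htpos).2 hst⟩, ?_⟩
        simp only [add_sub_cancel_left, smul_smul]
        rw [div_mul_cancel₀ _ htpos.ne']
      have : x + s • c ∈ interior Ω :=
        hconv.openSegment_interior_closure_subset_interior
          (by rw [hopen.interior_eq]; exact hx) (frontier_subset_closure htf) hmemseg
      exact hsf.2 this
    have huniq : ∀ t : ℝ, 1 ≤ t → x + t • c ∈ frontier Ω → t = t₀ := by
      intro t ht htf
      rcases lt_trichotomy t t₀ with h | h | h
      · exact absurd (hlt_absurd t t₀ ht h htf hfront) (fun a => a)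
      · exact h
      · exact absurd (hlt_absurd t₀ t ht₀gt.le h hfront htf) (fun a => a)
    have hex : ∃ t : ℝ, 1 ≤ t ∧ x + t • (y - x) ∈ frontier Ω :=
      ⟨t₀, ht₀gt.le, hfront⟩
    -- compute the LHS
    have hchoose : hex.choose = t₀ := huniq _ hex.choose_spec.1 hex.choose_spec.2
    have hdx : dist x (x + t₀ • c) = t₀ * ‖c‖ := by
      rw [dist_eq_norm]
      have : x - (x + t₀ • c) = -(t₀ • c) := by abel
      rw [this, norm_neg, norm_smul, Real.norm_eq_abs, abs_of_pos ht₀pos]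
    have hdy : dist y (x + t₀ • c) = (t₀ - 1) * ‖c‖ := by
      rw [dist_eq_norm]
      have : y - (x + t₀ • c) = -((t₀ - 1) • c) := by
        rw [sub_smul, one_smul]
        simp only [hc_def]
        abel
      rw [this, norm_neg, norm_smul, Real.norm_eq_abs, abs_of_pos (by linarith)]
    have hLHS : funk Ω x y = Real.log (t₀ / (t₀ - 1)) := by
      rw [funk, dif_pos hex, hchoose]
      rw [← hc_def, hdx, hdy, mul_div_mul_right _ _ hcnorm.ne']
    rw [hLHS]
    -- properties of supporting functionals
    have hub : ∀ r ∈ {r : ℝ | ∃ h : EuclideanSpace ℝ (Fin n) →ₗ[ℝ] ℝ,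
        (∀ z ∈ Ω, h z < 1) ∧ (∃ a ∈ frontier Ω, h a = 1) ∧
        r = Real.log ((1 - h x) / (1 - h y))}, r ≤ Real.log (t₀ / (t₀ - 1)) := by
      rintro r ⟨h, hlt, -, rfl⟩
      have hcont : Continuous h := h.continuous_of_finiteDimensional
      have hcl : ∀ z ∈ closure Ω, h z ≤ 1 := by
        intro z hz
        have : closure Ω ⊆ h ⁻¹' Set.Iic 1 :=
          closure_minimal (fun w hw => (hlt w hw).le) (isClosed_Iic.preimage hcont)
        exact this hz
      have hxlt : h x < 1 := hlt x hx
      have hylt : h y < 1 := hlt y hy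
      have hkey : h x + t₀ * (h y - h x) ≤ 1 := by
        have := hcl _ (frontier_subset_closure hfront)
        rwa [map_add, map_smul, smul_eq_mul, hc_def, map_sub] at this
      apply Real.log_le_log (div_pos (by linarith) (by linarith))
      rw [div_le_div_iff₀ (by linarith) (by linarith)]
      nlinarith
    -- existence of a supporting functional at `x + t₀ • c`
    obtain ⟨f, hf⟩ := geometric_hahn_banach_open_point hconv hopen hnotΩ
    have hfa : (0 : ℝ) < f (x + t₀ • c) := by
      have := hf 0 h0
      simpa using this
    set h : EuclideanSpace ℝ (Fin n) →ₗ[ℝ] ℝ :=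
      (f (x + t₀ • c))⁻¹ • (f : EuclideanSpace ℝ (Fin n) →ₗ[ℝ] ℝ) with hh_def
    have hh_apply : ∀ z, h z = f z / f (x + t₀ • c) := by
      intro z
      simp [hh_def, div_eq_inv_mul]
    have hhlt : ∀ z ∈ Ω, h z < 1 := by
      intro z hz
      rw [hh_apply, div_lt_one hfa]
      exact hf z hz
    have hha : h (x + t₀ • c) = 1 := by
      rw [hh_apply, div_self hfa.ne']
    have hheq : h x + t₀ * (h y - h x) = 1 := by
      have := hha
      rwa [map_add, map_smul, smul_eq_mul, hc_def, map_sub] at this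
    have hyh : h y < 1 := hhlt y hy
    have hratio : (1 - h x) / (1 - h y) = t₀ / (t₀ - 1) := by
      rw [div_eq_div_iff (by linarith) (by linarith)]
      linear_combination hheq
    have hmem : Real.log (t₀ / (t₀ - 1)) ∈ {r : ℝ | ∃ h : EuclideanSpace ℝ (Fin n) →ₗ[ℝ] ℝ,
        (∀ z ∈ Ω, h z < 1) ∧ (∃ a ∈ frontier Ω, h a = 1) ∧
        r = Real.log ((1 - h x) / (1 - h y))} :=
      ⟨h, hhlt, ⟨x + t₀ • c, hfront, hha⟩, by rw [hratio]⟩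
    exact le_antisymm (le_csSup ⟨_, hub⟩ hmem) (csSup_le ⟨_, hmem⟩ hub)
end

section
/- For a bounded open convex domain Ω ⊂ ℝⁿ, F_Ω(x,y) = sup over all support hyperplanes H of Ω of log(dist(x,H)/dist(y,H)), where dist denotes Euclidean distance to the hyperplane. -/
open Real
open scoped Classical

open Metric in
lemma infDist_hyperplane {E : Type*} [NormedAddCommGroup E] [InnerProductSpace ℝ E]
    (v : E) (hv : v ≠ 0) (c : ℝ) (x : E) :
    Metric.infDist x {z : E | inner ℝ v z = c} = |(inner ℝ v x : ℝ) - c| / ‖v‖ := by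
  have hvn : (0:ℝ) < ‖v‖ := norm_pos_iff.mpr hv
  have hv2 : (inner ℝ v v : ℝ) ≠ 0 := by
    rw [real_inner_self_eq_norm_sq]; positivity
  set p : E := x - (((inner ℝ v x : ℝ) - c) / (inner ℝ v v : ℝ)) • v with hp
  have hpm : p ∈ {z : E | inner ℝ v z = c} := by
    simp only [Set.mem_setOf_eq, hp, inner_sub_right, real_inner_smul_right]
    field_simp
    ring
  apply le_antisymm
  · calc Metric.infDist x {z : E | inner ℝ v z = c} ≤ dist x p := infDist_le_dist_of_mem hpm
    _ = |(inner ℝ v x : ℝ) - c| / ‖v‖ := by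
        rw [dist_eq_norm]
        simp only [hp, sub_sub_cancel, norm_smul, Real.norm_eq_abs, abs_div]
        rw [real_inner_self_eq_norm_sq, abs_of_nonneg (by positivity : (0:ℝ) ≤ ‖v‖^2)]
        field_simp
  · by_contra hlt
    push_neg at hlt
    obtain ⟨z, hz, hdz⟩ := (infDist_lt_iff ⟨p, hpm⟩).mp hlt
    have hle : |(inner ℝ v x : ℝ) - c| ≤ dist x z * ‖v‖ := by
      rw [dist_eq_norm]
      calc |(inner ℝ v x : ℝ) - c| = |(inner ℝ v (x - z) : ℝ)| := by rw [inner_sub_right, hz]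
      _ ≤ ‖v‖ * ‖x - z‖ := abs_real_inner_le_norm v (x - z)
      _ = ‖x - z‖ * ‖v‖ := mul_comm _ _
    rw [lt_div_iff₀ hvn] at hdz
    linarith

lemma infDist_hyperplane' {n : ℕ} (h : EuclideanSpace ℝ (Fin n) →ₗ[ℝ] ℝ) (h0 : h ≠ 0)
    (c : ℝ) : ∃ N : ℝ, 0 < N ∧
      ∀ w, Metric.infDist w {z | h z = c} = |h w - c| / N := by
  set f := LinearMap.toContinuousLinearMap h with hf
  set v := (InnerProductSpace.toDual ℝ (EuclideanSpace ℝ (Fin n))).symm f with hv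
  have hvz : ∀ z, (inner ℝ v z : ℝ) = h z := by
    intro z
    rw [hv, InnerProductSpace.toDual_symm_apply]
    rfl
  have hvne : v ≠ 0 := by
    intro hv0
    apply h0
    ext z
    have := hvz z
    rw [hv0, inner_zero_left] at this
    exact this.symm
  refine ⟨‖v‖, norm_pos_iff.mpr hvne, fun w => ?_⟩
  have hset : {z : EuclideanSpace ℝ (Fin n) | h z = c} = {z | inner ℝ v z = c} := by
    ext z
    simp only [Set.mem_setOf_eq]
    rw [hvz z]
  rw [hset, infDist_hyperplane v hvne c w, hvz w]


lemma sep_sign {n : ℕ} {Ω : Set (EuclideanSpace ℝ (Fin n))} (hconv : Convex ℝ Ω)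
    (h : EuclideanSpace ℝ (Fin n) →ₗ[ℝ] ℝ) (c : ℝ) (hsep : ∀ z ∈ Ω, h z ≠ c) :
    (∀ z ∈ Ω, h z < c) ∨ (∀ z ∈ Ω, c < h z) := by
  by_contra hcon
  push_neg at hcon
  obtain ⟨⟨z1, hz1, hz1c⟩, ⟨z2, hz2, hz2c⟩⟩ := hcon
  have h1 : c < h z1 := lt_of_le_of_ne hz1c (hsep z1 hz1).symm
  have h2 : h z2 < c := lt_of_le_of_ne hz2c (hsep z2 hz2)
  have hd : (0:ℝ) < h z1 - h z2 := by linarith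
  set s : ℝ := (c - h z2) / (h z1 - h z2) with hs
  have hs0 : 0 ≤ s := div_nonneg (by linarith) (le_of_lt hd)
  have hs1 : s ≤ 1 := (div_le_one hd).mpr (by linarith)
  have hw : (1 - s) • z2 + s • z1 ∈ Ω := hconv hz2 hz1 (by linarith) hs0 (by ring)
  apply hsep _ hw
  rw [map_add, map_smul, map_smul, smul_eq_mul, smul_eq_mul]
  have hkey : s * (h z1 - h z2) = c - h z2 := div_mul_cancel₀ _ (ne_of_gt hd)
  have hexp : (1 - s) * h z2 + s * h z1 = h z2 + s * (h z1 - h z2) := by ring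
  rw [hexp, hkey]; ring


theorem funk_eq_sup_support_hyperplanes {n : ℕ} (Ω : Set (EuclideanSpace ℝ (Fin n)))
    (hopen : IsOpen Ω) (hconv : Convex ℝ Ω) (hne : Ω.Nonempty)
    (hbdd : Bornology.IsBounded Ω)
    (x y : EuclideanSpace ℝ (Fin n)) (hx : x ∈ Ω) (hy : y ∈ Ω) :
    funk Ω x y = sSup {r : ℝ | ∃ (h : EuclideanSpace ℝ (Fin n) →ₗ[ℝ] ℝ) (c : ℝ),
      h ≠ 0 ∧ (∀ z ∈ Ω, h z ≠ c) ∧ (∃ a ∈ closure Ω, h a = c) ∧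
      r = Real.log (Metric.infDist x {z | h z = c} / Metric.infDist y {z | h z = c})} := by
  set S := {r : ℝ | ∃ (h : EuclideanSpace ℝ (Fin n) →ₗ[ℝ] ℝ) (c : ℝ),
      h ≠ 0 ∧ (∀ z ∈ Ω, h z ≠ c) ∧ (∃ a ∈ closure Ω, h a = c) ∧
      r = Real.log (Metric.infDist x {z | h z = c} / Metric.infDist y {z | h z = c})} with hSdef
  have hnotin : ∀ z ∈ Ω, z ∉ frontier Ω := by
    intro z hz hzf
    rw [hopen.frontier_eq] at hzf
    exact hzf.2 hz
  -- ratio of distances to a hyperplane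
  have hratio : ∀ (h : EuclideanSpace ℝ (Fin n) →ₗ[ℝ] ℝ) (c : ℝ), h ≠ 0 → h y ≠ c →
      Metric.infDist x {z | h z = c} / Metric.infDist y {z | h z = c}
        = |h x - c| / |h y - c| := by
    intro h c h0 hyc
    obtain ⟨N, hN, hNw⟩ := infDist_hyperplane' h h0 c
    rw [hNw x, hNw y]
    have hB : |h y - c| ≠ 0 := abs_ne_zero.mpr (sub_ne_zero.mpr hyc)
    field_simp
  by_cases hxy : y = x
  · -- degenerate case
    subst hxy
    have hno : ¬ ∃ t : ℝ, 1 ≤ t ∧ y + t • (y - y) ∈ frontier Ω := by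
      rintro ⟨t, -, hfr⟩
      rw [sub_self, smul_zero, add_zero] at hfr
      exact hnotin y hy hfr
    rw [funk, dif_neg hno]
    have hsub : S ⊆ {0} := by
      rintro r ⟨h, c, h0, hsep, ⟨a, ha, hac⟩, rfl⟩
      simp only [Set.mem_singleton_iff]
      by_cases hd : Metric.infDist y {z | h z = c} = 0
      · simp [hd]
      · rw [div_self hd, Real.log_one]
    rcases Set.subset_singleton_iff_eq.mp hsub with h0 | h0
    · rw [h0, Real.sSup_empty]
    · rw [h0, csSup_singleton]
  · -- main case
    have hd : y - x ≠ 0 := sub_ne_zero.mpr hxy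
    have hdn : (0:ℝ) < ‖y - x‖ := norm_pos_iff.mpr hd
    -- existence of the boundary point on the ray
    have hex : ∃ t : ℝ, 1 ≤ t ∧ x + t • (y - x) ∈ frontier Ω := by
      set T := {t : ℝ | x + t • (y - x) ∈ Ω} with hT
      have h1T : (1:ℝ) ∈ T := by simp [hT, hy]
      have hTbdd : BddAbove T := by
        obtain ⟨R, hR⟩ := hbdd.subset_closedBall x
        refine ⟨R / ‖y - x‖, fun t ht => ?_⟩
        have := hR ht
        rw [Metric.mem_closedBall, dist_eq_norm, add_sub_cancel_left, norm_smul,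
          Real.norm_eq_abs] at this
        rw [le_div_iff₀ hdn]
        calc t * ‖y - x‖ ≤ |t| * ‖y - x‖ := by
              exact mul_le_mul_of_nonneg_right (le_abs_self t) (le_of_lt hdn)
        _ ≤ R := this
      set t := sSup T with ht
      have ht1 : 1 ≤ t := le_csSup hTbdd h1T
      refine ⟨t, ht1, ?_⟩
      rw [hopen.frontier_eq]
      constructor
      · -- closure membership
        rw [Metric.mem_closure_iff]
        intro ε hε
        have hεd : 0 < ε / ‖y - x‖ := div_pos hε hdn
        obtain ⟨s, hsT, hst⟩ := exists_lt_of_lt_csSup ⟨1, h1T⟩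
          (by linarith : t - ε / ‖y - x‖ < t)
        refine ⟨x + s • (y - x), hsT, ?_⟩
        have hsle : s ≤ t := le_csSup hTbdd hsT
        rw [dist_eq_norm]
        have heq : (x + t • (y - x)) - (x + s • (y - x)) = (t - s) • (y - x) := by module
        rw [heq, norm_smul, Real.norm_eq_abs, abs_of_nonneg (by linarith)]
        have h1 : t - s < ε / ‖y - x‖ := by linarith
        calc (t - s) * ‖y - x‖ < (ε / ‖y - x‖) * ‖y - x‖ :=
              mul_lt_mul_of_pos_right h1 hdn
        _ = ε := div_mul_cancel₀ ε (ne_of_gt hdn)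
      · -- not in Ω
        intro hmem
        obtain ⟨ε, hε, hball⟩ := Metric.isOpen_iff.mp hopen _ hmem
        have hδ : 0 < ε / (2 * ‖y - x‖) := by positivity
        have hT2 : t + ε / (2 * ‖y - x‖) ∈ T := by
          apply hball
          rw [Metric.mem_ball, dist_eq_norm]
          have heq : (x + (t + ε / (2 * ‖y - x‖)) • (y - x)) - (x + t • (y - x))
              = (ε / (2 * ‖y - x‖)) • (y - x) := by module
          rw [heq, norm_smul, Real.norm_eq_abs, abs_of_pos hδ]
          have : ε / (2 * ‖y - x‖) * ‖y - x‖ = ε / 2 := by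
            field_simp
          rw [this]
          linarith
        have := le_csSup hTbdd hT2
        linarith
    rw [funk, dif_pos hex]
    obtain ⟨ht1, hfr⟩ := hex.choose_spec
    set t := hex.choose with htdef
    set a := x + t • (y - x) with hadef
    have haco : a ∈ closure Ω := frontier_subset_closure hfr
    have hanotin : a ∉ Ω := by
      intro h
      exact hnotin a h hfr
    have htgt : 1 < t := by
      rcases lt_or_eq_of_le ht1 with h | h
      · exact h
      · exfalso
        apply hanotin
        rw [hadef, ← h, one_smul, add_sub_cancel]
        exact hy
    have hdxa : dist x a = t * ‖y - x‖ := by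
      rw [hadef, dist_eq_norm]
      simp only [sub_add_cancel_left, norm_neg, norm_smul, Real.norm_eq_abs]
      rw [abs_of_pos (by linarith : (0:ℝ) < t)]
    have hdya : dist y a = (t - 1) * ‖y - x‖ := by
      rw [dist_eq_norm']
      have : a - y = (t - 1) • (y - x) := by
        rw [hadef]; module
      rw [this, norm_smul, Real.norm_eq_abs, abs_of_pos (by linarith : (0:ℝ) < t - 1)]
    have hL : dist x a / dist y a = t / (t - 1) := by
      rw [hdxa, hdya, mul_div_mul_right _ _ (ne_of_gt hdn)]
    rw [hL]
    have hha : ∀ (h : EuclideanSpace ℝ (Fin n) →ₗ[ℝ] ℝ), h a = h x + t * (h y - h x) := by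
      intro h
      rw [hadef, map_add, map_smul, map_sub, smul_eq_mul]
    -- upper bound
    have hub : ∀ r ∈ S, r ≤ Real.log (t / (t - 1)) := by
      rintro r ⟨h, c, h0, hsep, ⟨b, hb, hbc⟩, rfl⟩
      rw [hratio h c h0 (hsep y hy)]
      have hta : h a = h x + t * (h y - h x) := hha h
      rcases sep_sign hconv h c hsep with hlt | hgt
      · have hclo : closure Ω ⊆ {z | h z ≤ c} := by
          apply closure_minimal (fun z hz => le_of_lt (hlt z hz))
          exact isClosed_le (LinearMap.continuous_of_finiteDimensional h) continuous_const
        have hac : h a ≤ c := hclo haco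
        have hxc : h x < c := hlt x hx
        have hyc : h y < c := hlt y hy
        rw [abs_of_neg (by linarith : h x - c < 0), abs_of_neg (by linarith : h y - c < 0)]
        apply Real.log_le_log (div_pos (by linarith) (by linarith))
        rw [div_le_div_iff₀ (by linarith) (by linarith)]
        nlinarith
      · have hclo : closure Ω ⊆ {z | c ≤ h z} := by
          apply closure_minimal (fun z hz => le_of_lt (hgt z hz))
          exact isClosed_le continuous_const (LinearMap.continuous_of_finiteDimensional h)
        have hac : c ≤ h a := hclo haco
        have hxc : c < h x := hgt x hx
        have hyc : c < h y := hgt y hy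
        rw [abs_of_pos (by linarith : 0 < h x - c), abs_of_pos (by linarith : 0 < h y - c)]
        apply Real.log_le_log (div_pos (by linarith) (by linarith))
        rw [div_le_div_iff₀ (by linarith) (by linarith)]
        nlinarith
    -- the supremum is attained
    have hmem : Real.log (t / (t - 1)) ∈ S := by
      obtain ⟨f, hf⟩ := geometric_hahn_banach_open_point hconv hopen hanotin
      set g : EuclideanSpace ℝ (Fin n) →ₗ[ℝ] ℝ := (f : EuclideanSpace ℝ (Fin n) →ₗ[ℝ] ℝ)
        with hg
      have hga : g a = g x + t * (g y - g x) := hha g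
      have hfy : g y < g a := hf y hy
      have hfx : g x < g a := hf x hx
      have hfyx : 0 < g y - g x := by nlinarith
      have hgne : g ≠ 0 := by
        intro h0
        rw [h0] at hfx
        simp at hfx
      refine ⟨g, g a, hgne, fun z hz => ne_of_lt (hf z hz), ⟨a, haco, rfl⟩, ?_⟩
      rw [hratio g (g a) hgne (ne_of_lt hfy)]
      congr 1
      have hxa : g x - g a = -(t * (g y - g x)) := by rw [hga]; ring
      have hya : g y - g a = -((t - 1) * (g y - g x)) := by rw [hga]; ring
      rw [hxa, hya, abs_neg, abs_neg,
        abs_of_pos (mul_pos (by linarith : (0:ℝ) < t) hfyx),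
        abs_of_pos (mul_pos (by linarith : (0:ℝ) < t - 1) hfyx),
        mul_div_mul_right _ _ (ne_of_gt hfyx)]
    exact le_antisymm (le_csSup ⟨_, hub⟩ hmem) (csSup_le ⟨_, hmem⟩ hub)
end

section
/- For the positive orthant Ω = ℝ₊ⁿ = {x : xᵢ > 0 for all i}, the Funk metric is given by F_Ω(x,y) = max over 1 ≤ i ≤ n of max{0, log(xᵢ/yᵢ)}. -/
open Real
open scoped Classical

lemma orthant_isOpen {n : ℕ} :
    IsOpen {z : EuclideanSpace ℝ (Fin n) | ∀ i, 0 < z i} := by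
  have h : {z : EuclideanSpace ℝ (Fin n) | ∀ i, 0 < z i}
      = ⋂ i, {z : EuclideanSpace ℝ (Fin n) | 0 < z i} := by
    ext z; simp
  rw [h]
  exact isOpen_iInter_of_finite fun i =>
    isOpen_lt continuous_const (EuclideanSpace.proj i).continuous

lemma orthant_closure {n : ℕ} :
    closure {z : EuclideanSpace ℝ (Fin n) | ∀ i, 0 < z i}
      = {z : EuclideanSpace ℝ (Fin n) | ∀ i, 0 ≤ z i} := by
  apply le_antisymm
  · apply closure_minimal
    · intro z hz i; exact (hz i).le
    · have h : {z : EuclideanSpace ℝ (Fin n) | ∀ i, 0 ≤ z i}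
          = ⋂ i, {z : EuclideanSpace ℝ (Fin n) | 0 ≤ z i} := by
        ext z; simp
      rw [h]
      exact isClosed_iInter fun i =>
        isClosed_le continuous_const (EuclideanSpace.proj i).continuous
  · intro z hz
    set o : EuclideanSpace ℝ (Fin n) := WithLp.toLp 2 (fun _ => (1 : ℝ)) with ho
    have htend : Filter.Tendsto (fun k : ℕ => z + (1 / (k + 1) : ℝ) • o)
        Filter.atTop (nhds z) := by
      have h0 : Filter.Tendsto (fun k : ℕ => ((1 / (k + 1) : ℝ)) • o)
          Filter.atTop (nhds ((0 : ℝ) • o)) :=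
        tendsto_one_div_add_atTop_nhds_zero_nat.smul_const o
      rw [zero_smul] at h0
      have := h0.const_add z
      simpa using this
    refine mem_closure_of_tendsto htend (Filter.Eventually.of_forall fun k => ?_)
    intro i
    have : (z + (1 / (k + 1) : ℝ) • o) i = z i + (1 / (k + 1) : ℝ) := by
      simp [PiLp.add_apply, PiLp.smul_apply, ho, smul_eq_mul]
    rw [this]
    have : (0 : ℝ) < 1 / (k + 1) := by positivity
    linarith [hz i]

lemma mem_frontier_orthant {n : ℕ} (z : EuclideanSpace ℝ (Fin n)) :
    z ∈ frontier {z : EuclideanSpace ℝ (Fin n) | ∀ i, 0 < z i}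
      ↔ (∀ i, 0 ≤ z i) ∧ ¬ (∀ i, 0 < z i) := by
  rw [frontier, orthant_isOpen.interior_eq, orthant_closure]
  simp [Set.mem_diff]

lemma ratio_eq {a b : ℝ} (hb : 0 < b) (hab : b < a) :
    (a / (a - b)) / ((a / (a - b)) - 1) = a / b := by
  have h1 : a - b ≠ 0 := by linarith
  have h2 : a / (a - b) - 1 = b / (a - b) := by field_simp; ring
  rw [h2]
  rw [div_div_div_cancel_right₀]
  exact h1

lemma ratio_antitone {a b : ℝ} (h1 : 1 < a) (hab : a ≤ b) :
    b / (b - 1) ≤ a / (a - 1) := by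
  rw [div_le_div_iff₀ (by linarith) (by linarith)]
  nlinarith

theorem funk_positive_orthant {n : ℕ}
    (x y : EuclideanSpace ℝ (Fin n))
    (hx : x ∈ {z : EuclideanSpace ℝ (Fin n) | ∀ i, 0 < z i})
    (hy : y ∈ {z : EuclideanSpace ℝ (Fin n) | ∀ i, 0 < z i}) :
    funk {z : EuclideanSpace ℝ (Fin n) | ∀ i, 0 < z i} x y
      = ⨆ i : Fin n, max 0 (Real.log (x i / y i)) := by
  simp only [Set.mem_setOf_eq] at hx hy
  have fcoord : ∀ (t : ℝ) (i : Fin n),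
      (x + t • (y - x)) i = x i + t * (y i - x i) := by
    intro t i
    simp [PiLp.add_apply, PiLp.smul_apply, PiLp.sub_apply, smul_eq_mul]
  by_cases hB : ∃ i, y i < x i
  · -- Case B: the ray hits the boundary
    obtain ⟨j, hj⟩ := hB
    set s : Finset (Fin n) := Finset.univ.filter (fun i => y i < x i) with hs_def
    have hs : s.Nonempty := ⟨j, by simp [hs_def, hj]⟩
    set g : Fin n → ℝ := fun i => x i / (x i - y i) with hg_def
    set tstar : ℝ := s.inf' hs g with ht_def
    obtain ⟨i0, hi0s, hi0⟩ := s.exists_mem_eq_inf' hs g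
    have hmem_s : ∀ i ∈ s, y i < x i := by
      intro i hi; simpa [hs_def] using hi
    have hnot_s : ∀ i ∉ s, x i ≤ y i := by
      intro i hi
      by_contra h
      exact hi (by simp [hs_def]; linarith)
    have hg_gt : ∀ i ∈ s, 1 < g i := by
      intro i hi
      have h1 := hmem_s i hi
      have h2 : 0 < x i - y i := by linarith
      rw [hg_def]
      rw [lt_div_iff₀ h2]
      linarith [hy i]
    have hg_mul : ∀ i ∈ s, g i * (x i - y i) = x i := by
      intro i hi
      have h2 : x i - y i ≠ 0 := by have := hmem_s i hi; intro h; linarith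
      rw [hg_def]; field_simp
    have hstar1 : 1 < tstar := by
      rw [ht_def, Finset.lt_inf'_iff]
      exact hg_gt
    have hstar_le : ∀ i ∈ s, tstar ≤ g i := fun i hi => Finset.inf'_le g hi
    -- coordinates of the hitting point
    have hmem : x + tstar • (y - x) ∈
        frontier {z : EuclideanSpace ℝ (Fin n) | ∀ i, 0 < z i} := by
      rw [mem_frontier_orthant]
      constructor
      · intro i
        rw [fcoord]
        by_cases hi : i ∈ s
        · have h1 := hmem_s i hi
          have h2 := hstar_le i hi
          have h3 := hg_mul i hi
          nlinarith
        · have h1 := hnot_s i hi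
          nlinarith [hy i, hstar1]
      · intro hall
        have := hall i0
        rw [fcoord] at this
        have h3 := hg_mul i0 hi0s
        rw [← hi0] at h3
        nlinarith
    have hex : ∃ t : ℝ, 1 ≤ t ∧ x + t • (y - x) ∈
        frontier {z : EuclideanSpace ℝ (Fin n) | ∀ i, 0 < z i} :=
      ⟨tstar, hstar1.le, hmem⟩
    -- uniqueness of the hitting time
    have huniq : ∀ t : ℝ, 1 ≤ t → x + t • (y - x) ∈
        frontier {z : EuclideanSpace ℝ (Fin n) | ∀ i, 0 < z i} → t = tstar := by
      intro t ht hmt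
      rw [mem_frontier_orthant] at hmt
      rcases lt_trichotomy t tstar with h | h | h
      · exfalso
        apply hmt.2
        intro i
        rw [fcoord]
        by_cases hi : i ∈ s
        · have h1 := hmem_s i hi
          have h2 := hstar_le i hi
          have h3 := hg_mul i hi
          nlinarith
        · have h1 := hnot_s i hi
          nlinarith [hy i]
      · exact h
      · exfalso
        have h0 := hmt.1 i0
        rw [fcoord] at h0
        have h3 := hg_mul i0 hi0s
        rw [← hi0] at h3
        have h4 := hmem_s i0 hi0s
        nlinarith
    have hchoice : hex.choose = tstar :=
      huniq _ hex.choose_spec.1 hex.choose_spec.2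
    -- compute the distances
    have hyx : y - x ≠ 0 := by
      intro h
      have : (y - x) i0 = 0 := by rw [h]; rfl
      rw [PiLp.sub_apply] at this
      have := hmem_s i0 hi0s
      linarith
    have hN : 0 < ‖y - x‖ := norm_pos_iff.mpr hyx
    have hda : dist x (x + tstar • (y - x)) = tstar * ‖y - x‖ := by
      rw [dist_eq_norm]
      have h1 : x - (x + tstar • (y - x)) = -(tstar • (y - x)) := by abel
      rw [h1, norm_neg, norm_smul, Real.norm_eq_abs,
        abs_of_pos (by linarith : (0:ℝ) < tstar)]
    have hdb : dist y (x + tstar • (y - x)) = (tstar - 1) * ‖y - x‖ := by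
      rw [dist_eq_norm]
      have h1 : y - (x + tstar • (y - x)) = (1 - tstar) • (y - x) := by
        rw [sub_smul, one_smul]; abel
      rw [h1, norm_smul, Real.norm_eq_abs, abs_of_neg (by linarith : 1 - tstar < 0)]
      ring
    have hratio : tstar * ‖y - x‖ / ((tstar - 1) * ‖y - x‖) = x i0 / y i0 := by
      rw [mul_div_mul_right _ _ (ne_of_gt hN)]
      rw [ht_def, hi0]
      have := hmem_s i0 hi0s
      exact ratio_eq (hy i0) this
    have hlhs : funk {z : EuclideanSpace ℝ (Fin n) | ∀ i, 0 < z i} x y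
        = Real.log (x i0 / y i0) := by
      rw [funk, dif_pos hex, hchoice, hda, hdb, hratio]
    rw [hlhs]
    -- now the supremum
    have hone_le : 1 ≤ x i0 / y i0 :=
      (one_le_div (hy i0)).mpr (hmem_s i0 hi0s).le
    have hpos0 : 0 ≤ Real.log (x i0 / y i0) := Real.log_nonneg hone_le
    haveI : Nonempty (Fin n) := ⟨i0⟩
    apply le_antisymm
    · have hb : BddAbove (Set.range fun i => max 0 (Real.log (x i / y i))) :=
        Set.Finite.bddAbove (Set.finite_range _)
      have h := le_ciSup hb i0
      calc Real.log (x i0 / y i0) = max 0 (Real.log (x i0 / y i0)) :=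
            (max_eq_right hpos0).symm
        _ ≤ _ := h
    · apply ciSup_le
      intro i
      apply max_le hpos0
      by_cases hi : i ∈ s
      · apply Real.log_le_log (div_pos (hx i) (hy i))
        have h1 : x i / y i = g i / (g i - 1) :=
          (ratio_eq (hy i) (hmem_s i hi)).symm
        have h2 : x i0 / y i0 = g i0 / (g i0 - 1) :=
          (ratio_eq (hy i0) (hmem_s i0 hi0s)).symm
        rw [h1, h2, ← hi0]
        exact ratio_antitone hstar1 (hstar_le i hi)
      · have h1 : x i / y i ≤ 1 := (div_le_one (hy i)).mpr (hnot_s i hi)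
        calc Real.log (x i / y i) ≤ Real.log 1 :=
              Real.log_le_log (div_pos (hx i) (hy i)) h1
          _ = 0 := Real.log_one
          _ ≤ Real.log (x i0 / y i0) := hpos0
  · -- Case A: the ray stays inside
    push_neg at hB
    have hno : ¬ ∃ t : ℝ, 1 ≤ t ∧ x + t • (y - x) ∈
        frontier {z : EuclideanSpace ℝ (Fin n) | ∀ i, 0 < z i} := by
      rintro ⟨t, ht, hmt⟩
      rw [mem_frontier_orthant] at hmt
      apply hmt.2
      intro i
      rw [fcoord]
      have h1 := hB i
      nlinarith [hy i]
    rw [funk, dif_neg hno]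
    rcases isEmpty_or_nonempty (Fin n) with he | hne
    · rw [Real.iSup_of_isEmpty]
    · haveI := hne
      have hterm : ∀ i, max 0 (Real.log (x i / y i)) = 0 := by
        intro i
        apply max_eq_left
        apply Real.log_nonpos (le_of_lt (div_pos (hx i) (hy i)))
        exact (div_le_one (hy i)).mpr (hB i)
      calc (0:ℝ) = ⨆ _ : Fin n, (0:ℝ) := (ciSup_const).symm
        _ = ⨆ i : Fin n, max 0 (Real.log (x i / y i)) := by
            congr 1; funext i; rw [hterm i]
end

section
/- Let B ⊂ ℝⁿ be the open Euclidean unit ball. For x ≠ y in B, the Funk metric is F_B(x,y) = log((√(|y−x|² − |x∧y|²) + |x|² − ⟨x,y⟩) / (√(|y−x|² − |x∧y|²) − |y|² + ⟨x,y⟩)), where |x∧y|² = |x|²|y|² − ⟨x,y⟩². -/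
set_option maxHeartbeats 1000000
open Real
open scoped Classical

open scoped RealInnerProductSpace in
theorem funk_unit_ball {n : ℕ}
    (x y : EuclideanSpace ℝ (Fin n))
    (hx : x ∈ Metric.ball (0 : EuclideanSpace ℝ (Fin n)) 1)
    (hy : y ∈ Metric.ball (0 : EuclideanSpace ℝ (Fin n)) 1) (hxy : x ≠ y) :
    funk (Metric.ball (0 : EuclideanSpace ℝ (Fin n)) 1) x y
      = Real.log ((Real.sqrt (‖y - x‖ ^ 2 - (‖x‖ ^ 2 * ‖y‖ ^ 2 - ⟪x, y⟫ ^ 2))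
            + ‖x‖ ^ 2 - ⟪x, y⟫)
          / (Real.sqrt (‖y - x‖ ^ 2 - (‖x‖ ^ 2 * ‖y‖ ^ 2 - ⟪x, y⟫ ^ 2))
            - ‖y‖ ^ 2 + ⟪x, y⟫)) := by
  have hne : y - x ≠ 0 := sub_ne_zero.mpr hxy.symm
  have hvpos : 0 < ‖y - x‖ := norm_pos_iff.mpr hne
  set c : ℝ := ‖y - x‖ ^ 2 with hcdef
  set b : ℝ := ⟪x, y⟫ - ‖x‖ ^ 2 with hbdef
  set e : ℝ := ‖x‖ ^ 2 - 1 with hedef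
  have hcpos : 0 < c := by positivity
  have hxn : ‖x‖ < 1 := mem_ball_zero_iff.mp hx
  have hyn : ‖y‖ < 1 := mem_ball_zero_iff.mp hy
  have heneg : e < 0 := by nlinarith [norm_nonneg x]
  have hc2 : c = ‖x‖ ^ 2 + ‖y‖ ^ 2 - 2 * ⟪x, y⟫ := by
    rw [hcdef, @norm_sub_sq_real, real_inner_comm y x]; ring
  have hq1 : c + 2 * b + e < 0 := by
    rw [hc2, hbdef, hedef]; nlinarith [norm_nonneg y]
  have hdisc : 0 ≤ b ^ 2 - c * e := by nlinarith
  set s : ℝ := Real.sqrt (b ^ 2 - c * e) with hsdef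
  have hsnn : 0 ≤ s := Real.sqrt_nonneg _
  have hs2 : s ^ 2 = b ^ 2 - c * e := Real.sq_sqrt hdisc
  -- s^2 > (b+c)^2
  have hsgt : (b + c) ^ 2 < s ^ 2 := by nlinarith
  have hsge : b + c < s := by nlinarith
  have hsge' : -s < b + c := by nlinarith
  -- expansion of the norm along the ray
  have expand : ∀ t : ℝ, ‖x + t • (y - x)‖ ^ 2 = c * t ^ 2 + 2 * b * t + ‖x‖ ^ 2 := by
    intro t
    rw [@norm_add_sq_real, real_inner_smul_right, inner_sub_right,
      real_inner_self_eq_norm_sq, norm_smul, Real.norm_eq_abs, mul_pow, sq_abs,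
      hbdef, hcdef]
    ring
  have hfr : frontier (Metric.ball (0 : EuclideanSpace ℝ (Fin n)) 1)
      = Metric.sphere 0 1 := frontier_ball 0 one_ne_zero
  have hmem : ∀ t : ℝ, (x + t • (y - x) ∈ frontier (Metric.ball (0 : EuclideanSpace ℝ (Fin n)) 1))
      ↔ c * t ^ 2 + 2 * b * t + e = 0 := by
    intro t
    rw [hfr, mem_sphere_zero_iff_norm]
    constructor
    · intro h
      have := expand t
      rw [h] at this
      rw [hedef]; nlinarith
    · intro h
      have h2 : ‖x + t • (y - x)‖ ^ 2 = 1 := by rw [expand t, hedef] at *; linarith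
      nlinarith [norm_nonneg (x + t • (y - x))]
  -- existence
  have hex : ∃ t : ℝ, 1 ≤ t ∧ x + t • (y - x) ∈
      frontier (Metric.ball (0 : EuclideanSpace ℝ (Fin n)) 1) := by
    refine ⟨(s - b) / c, ?_, ?_⟩
    · rw [le_div_iff₀ hcpos]; linarith
    · rw [hmem]
      field_simp
      nlinarith [hs2]
  rw [funk, dif_pos hex]
  set t : ℝ := hex.choose with htdef
  obtain ⟨ht1, hta⟩ := hex.choose_spec
  rw [hmem] at hta
  have h1 : (c * t + b) ^ 2 = s ^ 2 := by nlinarith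
  have h2 : 0 < c * t + b + s := by nlinarith
  have hkey : c * t + b = s := by
    have h3 : (c * t + b - s) * (c * t + b + s) = 0 := by nlinarith
    rcases mul_eq_zero.mp h3 with h | h
    · linarith
    · linarith
  have htgt : 1 < t := by nlinarith
  -- distances
  have hd1 : dist x (x + t • (y - x)) = t * ‖y - x‖ := by
    rw [dist_eq_norm]
    have : x - (x + t • (y - x)) = (-t) • (y - x) := by module
    rw [this, norm_smul, Real.norm_eq_abs, abs_neg, abs_of_pos (by linarith : (0:ℝ) < t)]
  have hd2 : dist y (x + t • (y - x)) = (t - 1) * ‖y - x‖ := by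
    rw [dist_eq_norm]
    have : y - (x + t • (y - x)) = (1 - t) • (y - x) := by module
    rw [this, norm_smul, Real.norm_eq_abs, abs_of_neg (by linarith : (1:ℝ) - t < 0)]
    ring
  rw [hd1, hd2]
  congr 1
  have harg : ‖y - x‖ ^ 2 - (‖x‖ ^ 2 * ‖y‖ ^ 2 - ⟪x, y⟫ ^ 2) = b ^ 2 - c * e := by
    rw [hbdef, hedef, ← hcdef]
    linear_combination (‖x‖ ^ 2) * hc2
  rw [harg, ← hsdef]
  have hnum : s + ‖x‖ ^ 2 - ⟪x, y⟫ = c * t := by rw [← hkey, hbdef]; ring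
  have hden : s - ‖y‖ ^ 2 + ⟪x, y⟫ = c * (t - 1) := by
    rw [← hkey, hbdef, hc2]; ring
  rw [hnum, hden]
  rw [mul_comm c t, mul_comm c (t - 1), mul_div_mul_right _ _ (ne_of_gt hcpos)]
  rw [mul_div_mul_right _ _ (ne_of_gt hvpos)]
end

section
/- Let Ω ⊂ ℝⁿ be a proper open convex domain with Funk metric F_Ω, x ∈ Ω, and ρ > 0. Then the forward open ball B⁺(x,ρ) = {y ∈ Ω : F_Ω(x,y) < ρ} equals the image of Ω under the homothety centered at x with ratio 1 − e^{−ρ}, i.e., B⁺(x,ρ) = x + (1 − e^{−ρ})(Ω − x). -/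
open Real
open scoped Classical

/-- Convex combination of an interior point and a closure point, in "base point plus
scaled difference" form. -/
lemma funk_combo_mem {n : ℕ} {Ω : Set (EuclideanSpace ℝ (Fin n))}
    (hopen : IsOpen Ω) (hconv : Convex ℝ Ω) {x w : EuclideanSpace ℝ (Fin n)}
    (hx : x ∈ Ω) (hw : w ∈ closure Ω) {b : ℝ} (hb0 : 0 ≤ b) (hb1 : b < 1) :
    x + b • (w - x) ∈ Ω := by
  have h := hconv.combo_interior_closure_mem_interior
    (x := x) (y := w) (by rwa [hopen.interior_eq]) hw
    (show (0:ℝ) < 1 - b by linarith) hb0 (by ring)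
  rw [hopen.interior_eq] at h
  have : x + b • (w - x) = (1 - b) • x + b • w := by module
  rwa [this]

/-- If the forward ray from `x` through `y ∈ Ω` never meets the frontier,
then the whole forward ray stays in `Ω`. -/
lemma funk_ray_mem_of_no_frontier {n : ℕ} {Ω : Set (EuclideanSpace ℝ (Fin n))}
    (hopen : IsOpen Ω) (hconv : Convex ℝ Ω) {x y : EuclideanSpace ℝ (Fin n)}
    (hx : x ∈ Ω) (hy : y ∈ Ω)
    (h : ¬ ∃ t : ℝ, 1 ≤ t ∧ x + t • (y - x) ∈ frontier Ω) {s : ℝ} (hs : 1 ≤ s) :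
    x + s • (y - x) ∈ Ω := by
  by_contra hsΩ
  set g : ℝ → EuclideanSpace ℝ (Fin n) := fun t => x + t • (y - x) with hg
  have hgc : Continuous g := by
    exact continuous_const.add (continuous_id.smul continuous_const)
  set S : Set ℝ := {t | t ∈ Set.Icc (0:ℝ) s ∧ g t ∈ Ω} with hS
  have h1S : (1:ℝ) ∈ S := by
    refine ⟨⟨zero_le_one, hs⟩, ?_⟩
    show x + (1:ℝ) • (y - x) ∈ Ω
    simpa using hy
  have hSne : S.Nonempty := ⟨1, h1S⟩
  have hSbdd : BddAbove S := ⟨s, fun t ht => ht.1.2⟩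
  set b := sSup S with hb
  have hb1 : 1 ≤ b := le_csSup hSbdd h1S
  have hbs : b ≤ s := csSup_le hSne fun t ht => ht.1.2
  have hbcl : g b ∈ closure Ω := by
    have h1 : b ∈ closure S := csSup_mem_closure hSne hSbdd
    have h2 : S ⊆ g ⁻¹' Ω := fun t ht => ht.2
    have h3 : closure S ⊆ closure (g ⁻¹' Ω) := closure_mono h2
    exact hgc.closure_preimage_subset Ω (h3 h1)
  have hbnot : g b ∉ Ω := by
    intro hbΩ
    have hbs' : b < s := by
      rcases lt_or_eq_of_le hbs with h' | h'
      · exact h'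
      · exact absurd (h' ▸ hbΩ) hsΩ
    have : IsOpen (g ⁻¹' Ω) := hopen.preimage hgc
    rcases Metric.isOpen_iff.mp this b hbΩ with ⟨ε, hε, hball⟩
    set t := min s (b + ε / 2) with ht
    have htb : b < t := lt_min hbs' (by linarith)
    have htS : t ∈ S := by
      refine ⟨⟨by positivity, min_le_left _ _⟩, ?_⟩
      apply hball
      rw [Metric.mem_ball, Real.dist_eq, abs_lt]
      have hmr : t ≤ b + ε / 2 := min_le_right _ _
      constructor
      · linarith
      · linarith
    have := le_csSup hSbdd htS
    linarith
  exact h ⟨b, hb1, by rw [hopen.frontier_eq]; exact ⟨hbcl, hbnot⟩⟩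

theorem funk_forward_ball_homothety {n : ℕ} (Ω : Set (EuclideanSpace ℝ (Fin n)))
    (hopen : IsOpen Ω) (hconv : Convex ℝ Ω) (hne : Ω.Nonempty) (hproper : Ω ≠ Set.univ)
    (x : EuclideanSpace ℝ (Fin n)) (hx : x ∈ Ω) (ρ : ℝ) (hρ : 0 < ρ) :
    {y ∈ Ω | funk Ω x y < ρ}
      = (fun z => x + (1 - Real.exp (-ρ)) • (z - x)) '' Ω := by
  have hE1 : 1 < Real.exp ρ := by
    have := Real.add_one_lt_exp (ne_of_gt hρ); linarith
  have hexpneg : Real.exp (-ρ) = (Real.exp ρ)⁻¹ := by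
    rw [Real.exp_neg]
  set c : ℝ := 1 - Real.exp (-ρ) with hc
  have hc0 : 0 < c := by
    have : Real.exp (-ρ) < 1 := Real.exp_lt_one_iff.mpr (by linarith)
    simp [hc]; linarith
  have hc1 : c < 1 := by
    have : 0 < Real.exp (-ρ) := Real.exp_pos _
    simp [hc]; linarith
  set s : ℝ := c⁻¹ with hsdef
  have hs1 : 1 < s := by
    rw [hsdef, lt_inv_comm₀ one_pos hc0]
    simpa using hc1
  have hcs : c * s = 1 := by
    rw [hsdef, mul_inv_cancel₀ (ne_of_gt hc0)]
  have hsE : s = Real.exp ρ / (Real.exp ρ - 1) := by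
    rw [hsdef, hc, hexpneg]
    rw [inv_eq_iff_eq_inv, inv_div]
    field_simp
  have hsmul : s * (Real.exp ρ - 1) = Real.exp ρ := by
    rw [hsE, div_mul_cancel₀ _ (by linarith : Real.exp ρ - 1 ≠ 0)]
  -- disjointness of Ω and its frontier
  have hdisj : ∀ w, w ∈ frontier Ω → w ∉ Ω := by
    intro w hw hwΩ
    rw [hopen.frontier_eq] at hw
    exact hw.2 hwΩ
  ext y
  simp only [Set.mem_setOf_eq, Set.mem_image]
  constructor
  · rintro ⟨hy, hfunk⟩
    by_cases hyx : y = x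
    · exact ⟨x, hx, by simp [hyx]⟩
    -- y ≠ x : we show x + s • (y - x) ∈ Ω and take z to be that point
    have hznice : ∀ z ∈ Ω, z = x + s • (y - x) → x + c • (z - x) = y := by
      intro z _ hz
      rw [hz]
      have : c • (x + s • (y - x) - x) = (c * s) • (y - x) := by
        rw [mul_smul]; congr 1; abel
      rw [this, hcs]
      module
    by_cases h : ∃ t : ℝ, 1 ≤ t ∧ x + t • (y - x) ∈ frontier Ω
    · -- the ray meets the frontier, at parameter t₀ := h.choose
      rw [funk, dif_pos h] at hfunk
      obtain ⟨ht₀1, ht₀f⟩ := h.choose_spec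
      set t₀ := h.choose with ht₀
      have hyx' : y - x ≠ 0 := sub_ne_zero_of_ne hyx
      have hynorm : 0 < ‖y - x‖ := norm_pos_iff.mpr hyx'
      have ht₀ne1 : t₀ ≠ 1 := by
        intro h1
        apply hdisj _ ht₀f
        rw [h1]; simpa using hy
      have ht₀gt1 : 1 < t₀ := lt_of_le_of_ne ht₀1 (Ne.symm ht₀ne1)
      -- compute funk
      have hd1 : dist x (x + t₀ • (y - x)) = t₀ * ‖y - x‖ := by
        rw [dist_self_add_right, norm_smul, Real.norm_eq_abs,
          abs_of_pos (by linarith : (0:ℝ) < t₀)]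
      have hd2 : dist y (x + t₀ • (y - x)) = (t₀ - 1) * ‖y - x‖ := by
        have : y - (x + t₀ • (y - x)) = -((t₀ - 1) • (y - x)) := by module
        rw [dist_eq_norm, this, norm_neg, norm_smul, Real.norm_eq_abs,
          abs_of_pos (by linarith : (0:ℝ) < t₀ - 1)]
      rw [hd1, hd2] at hfunk
      have hratio : t₀ * ‖y - x‖ / ((t₀ - 1) * ‖y - x‖) = t₀ / (t₀ - 1) :=
        mul_div_mul_right _ _ (ne_of_gt hynorm)
      rw [hratio] at hfunk
      have hu : (0:ℝ) < t₀ / (t₀ - 1) := div_pos (by linarith) (by linarith)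
      have hult : t₀ / (t₀ - 1) < Real.exp ρ := by
        have := Real.exp_lt_exp.mpr hfunk
        rwa [Real.exp_log hu] at this
      have hst₀ : s < t₀ := by
        rw [div_lt_iff₀ (by linarith : (0:ℝ) < t₀ - 1)] at hult
        nlinarith [hsmul, hE1]
      -- so x + s • (y - x) is between x and the frontier point
      have hsmem : x + s • (y - x) ∈ Ω := by
        have : x + s • (y - x) = x + (s / t₀) • ((x + t₀ • (y - x)) - x) := by
          have ht₀0 : t₀ ≠ 0 := by linarith
          have : (s / t₀) • ((x + t₀ • (y - x)) - x) = (s / t₀ * t₀) • (y - x) := by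
            rw [mul_smul]; congr 1; abel
          rw [this, div_mul_cancel₀ _ ht₀0]
        rw [this]
        exact funk_combo_mem hopen hconv hx ht₀f.1
          (div_nonneg (by linarith) (by linarith))
          (by rw [div_lt_one (by linarith : (0:ℝ) < t₀)]; exact hst₀)
      exact ⟨x + s • (y - x), hsmem, hznice _ hsmem rfl⟩
    · -- no frontier intersection: whole ray in Ω
      have hsmem : x + s • (y - x) ∈ Ω :=
        funk_ray_mem_of_no_frontier hopen hconv hx hy h (le_of_lt hs1)
      exact ⟨x + s • (y - x), hsmem, hznice _ hsmem rfl⟩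
  · rintro ⟨z, hz, hzy⟩
    have hyΩ : y ∈ Ω := by
      rw [← hzy]
      have : x + c • (z - x) = (1 - c) • x + c • z := by module
      rw [this]
      exact hconv hx hz (by linarith) (le_of_lt hc0) (by ring)
    refine ⟨hyΩ, ?_⟩
    have hzval : z = x + s • (y - x) := by
      rw [← hzy]
      have : s • (x + c • (z - x) - x) = (s * c) • (z - x) := by
        rw [mul_smul]; congr 1; abel
      rw [this, mul_comm, hcs]
      module
    by_cases h : ∃ t : ℝ, 1 ≤ t ∧ x + t • (y - x) ∈ frontier Ω
    · rw [funk, dif_pos h]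
      obtain ⟨ht₀1, ht₀f⟩ := h.choose_spec
      set t₀ := h.choose with ht₀
      -- first, y ≠ x
      have hyx : y ≠ x := by
        intro h1
        apply hdisj _ ht₀f
        rw [h1]; simpa using hx
      have hyx' : y - x ≠ 0 := sub_ne_zero_of_ne hyx
      have hynorm : 0 < ‖y - x‖ := norm_pos_iff.mpr hyx'
      -- t₀ > s
      have hst₀ : s < t₀ := by
        by_contra hle
        push_neg at hle
        rcases lt_or_eq_of_le hle with h' | h'
        · -- t₀ < s ⇒ frontier point interior to segment from x to z ∈ Ω: contradiction
          apply hdisj _ ht₀f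
          have hzx : z - x = s • (y - x) := by rw [hzval]; abel
          have : x + t₀ • (y - x) = x + (t₀ / s) • (z - x) := by
            rw [hzx, smul_smul, div_mul_cancel₀ _ (ne_of_gt (by linarith : (0:ℝ) < s))]
          rw [this]
          exact funk_combo_mem hopen hconv hx (subset_closure hz)
            (div_nonneg (by linarith) (by linarith))
            (by rw [div_lt_one (by linarith : (0:ℝ) < s)]; exact h')
        · -- t₀ = s ⇒ frontier point equals z ∈ Ω
          apply hdisj _ ht₀f
          rw [h', ← hzval]
          exact hz
      have ht₀gt1 : 1 < t₀ := lt_trans hs1 hst₀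
      have hd1 : dist x (x + t₀ • (y - x)) = t₀ * ‖y - x‖ := by
        rw [dist_self_add_right, norm_smul, Real.norm_eq_abs,
          abs_of_pos (by linarith : (0:ℝ) < t₀)]
      have hd2 : dist y (x + t₀ • (y - x)) = (t₀ - 1) * ‖y - x‖ := by
        have : y - (x + t₀ • (y - x)) = -((t₀ - 1) • (y - x)) := by module
        rw [dist_eq_norm, this, norm_neg, norm_smul, Real.norm_eq_abs,
          abs_of_pos (by linarith : (0:ℝ) < t₀ - 1)]
      rw [hd1, hd2]
      have hratio : t₀ * ‖y - x‖ / ((t₀ - 1) * ‖y - x‖) = t₀ / (t₀ - 1) :=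
        mul_div_mul_right _ _ (ne_of_gt hynorm)
      rw [hratio]
      have hu : (0:ℝ) < t₀ / (t₀ - 1) := div_pos (by linarith) (by linarith)
      have hult : t₀ / (t₀ - 1) < Real.exp ρ := by
        rw [div_lt_iff₀ (by linarith : (0:ℝ) < t₀ - 1)]
        nlinarith [hsmul, hE1, mul_pos (sub_pos.mpr hst₀) (sub_pos.mpr hE1)]
      calc Real.log (t₀ / (t₀ - 1)) < Real.log (Real.exp ρ) :=
            Real.log_lt_log hu hult
        _ = ρ := Real.log_exp ρ
    · rw [funk, dif_neg h]
      exact hρ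
end

section
/- Let Ω ⊂ ℝⁿ be a proper open convex domain with Funk metric F_Ω, x ∈ Ω, ρ > 0. Then the backward open ball B⁻(x,ρ) = {y ∈ Ω : F_Ω(y,x) < ρ} equals Ω ∩ (x − (e^{ρ} − 1)(Ω − x)). -/
open Real
open scoped Classical

theorem funk_backward_ball_homothety {n : ℕ} (Ω : Set (EuclideanSpace ℝ (Fin n)))
    (hopen : IsOpen Ω) (hconv : Convex ℝ Ω) (hne : Ω.Nonempty) (hproper : Ω ≠ Set.univ)
    (x : EuclideanSpace ℝ (Fin n)) (hx : x ∈ Ω) (ρ : ℝ) (hρ : 0 < ρ) :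
    {y ∈ Ω | funk Ω y x < ρ}
      = Ω ∩ ((fun z => x - (Real.exp ρ - 1) • (z - x)) '' Ω) := by
  have hE : 1 < Real.exp ρ := by
    calc (1:ℝ) = Real.exp 0 := by simp
    _ < Real.exp ρ := Real.exp_lt_exp.mpr hρ
  set E : ℝ := Real.exp ρ with hEdef
  have he : 0 < E - 1 := by linarith
  set c : ℝ := E / (E - 1) with hcdef
  have hc1 : 1 < c := (one_lt_div he).mpr (by linarith)
  have hc0 : 0 ≤ c := by linarith
  -- segment lemma: points strictly between an interior point and a closure point are in Ω
  have seg : ∀ (y : EuclideanSpace ℝ (Fin n)) (t s : ℝ), y ∈ Ω →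
      y + t • (x - y) ∈ closure Ω → 0 ≤ s → s < t → y + s • (x - y) ∈ Ω := by
    intro y t s hy hcl hs hst
    have ht : 0 < t := lt_of_le_of_lt hs hst
    have hpt : (1 - s/t) • y + (s/t) • (y + t • (x - y)) = y + s • (x - y) := by
      rw [smul_add, smul_smul, div_mul_cancel₀ _ ht.ne']
      module
    have comb := hconv.combo_interior_closure_mem_interior
      (by rw [hopen.interior_eq]; exact hy) hcl
      (sub_pos.mpr ((div_lt_one ht).mpr hst))
      (div_nonneg hs ht.le)
      (by ring)
    rw [hopen.interior_eq] at comb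
    rwa [hpt] at comb
  -- key equivalence
  have key : ∀ y ∈ Ω, (funk Ω y x < ρ ↔ y + c • (x - y) ∈ Ω) := by
    intro y hy
    rw [funk]
    split_ifs with h
    · obtain ⟨hT1, hTf⟩ := h.choose_spec
      set T : ℝ := h.choose with hTdef
      have hTnΩ : y + T • (x - y) ∉ Ω := by
        intro hmem
        exact (hopen.frontier_eq ▸ hTf).2 hmem
      have hTcl : y + T • (x - y) ∈ closure Ω := hTf.1
      have hxy : x ≠ y := by
        intro hxe
        apply hTnΩ
        simp [hxe, hy]
      have hT : 1 < T := by
        rcases lt_or_eq_of_le hT1 with h' | h'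
        · exact h'
        · exfalso; apply hTnΩ; rw [← h']; simpa using hx
      have hnorm : 0 < ‖x - y‖ := by
        rw [norm_pos_iff]; exact sub_ne_zero.mpr hxy
      have hd1 : dist y (y + T • (x - y)) = T * ‖x - y‖ := by
        rw [dist_self_add_right, norm_smul, Real.norm_eq_abs,
          abs_of_pos (by linarith : (0:ℝ) < T)]
      have hd2 : dist x (y + T • (x - y)) = (T - 1) * ‖x - y‖ := by
        have hxe : x - (y + T • (x - y)) = (1 - T) • (x - y) := by module
        rw [dist_eq_norm, hxe, norm_smul, Real.norm_eq_abs,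
          abs_of_neg (by linarith : 1 - T < 0)]
        ring
      rw [hd1, hd2]
      have hratio : T * ‖x - y‖ / ((T - 1) * ‖x - y‖) = T / (T - 1) := by
        rw [mul_div_mul_right _ _ hnorm.ne']
      rw [hratio]
      have hTpos : 0 < T / (T - 1) := div_pos (by linarith) (by linarith)
      rw [Real.log_lt_iff_lt_exp hTpos]
      have hiff : T / (T - 1) < E ↔ c < T := by
        rw [div_lt_iff₀ (by linarith : (0:ℝ) < T - 1), hcdef, div_lt_iff₀ he]
        constructor <;> intro <;> nlinarith
      rw [hiff]
      constructor
      · intro hcT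
        exact seg y T c hy hTcl hc0 hcT
      · intro hcΩ
        by_contra hle
        push_neg at hle
        rcases lt_or_eq_of_le hle with h' | h'
        · exact hTnΩ (seg y c T hy (subset_closure hcΩ) (by linarith) h')
        · exact hTnΩ (h' ▸ hcΩ)
    · simp only [hρ, true_iff]
      by_contra hpc
      apply h
      set f : ℝ → EuclideanSpace ℝ (Fin n) := fun t => y + t • (x - y) with hf
      have hcont : Continuous f := by fun_prop
      set A : Set ℝ := f ⁻¹' Ω with hA
      have h1A : (1:ℝ) ∈ A := by
        simp only [hA, hf, Set.mem_preimage, one_smul]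
        convert hx using 2
        module
      have hbdd : BddAbove A := by
        refine ⟨c, fun t ht => ?_⟩
        by_contra hct
        push_neg at hct
        exact hpc (seg y t c hy (subset_closure ht) hc0 hct)
      set β : ℝ := sSup A with hβ
      have hβ1 : 1 ≤ β := le_csSup hbdd h1A
      have hβcl : f β ∈ closure Ω := by
        have : β ∈ closure A := csSup_mem_closure ⟨1, h1A⟩ hbdd
        exact hcont.closure_preimage_subset Ω this
      have hβnΩ : f β ∉ Ω := by
        intro hβΩ
        have hAopen : IsOpen A := hopen.preimage hcont
        obtain ⟨ε, hε, hball⟩ := Metric.isOpen_iff.mp hAopen β hβΩ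
        have : β + ε/2 ∈ A := hball (by
          have hd : β + ε/2 - β = ε/2 := by ring
          rw [Metric.mem_ball, Real.dist_eq, hd, abs_of_pos] <;> linarith)
        have := le_csSup hbdd this
        linarith
      exact ⟨β, hβ1, by rw [frontier, hopen.interior_eq]; exact ⟨hβcl, hβnΩ⟩⟩
  ext y
  simp only [Set.mem_setOf_eq, Set.mem_inter_iff, Set.mem_image]
  constructor
  · rintro ⟨hy, hf⟩
    refine ⟨hy, y + c • (x - y), (key y hy).mp hf, ?_⟩
    have hec : (E - 1) * (c - 1) = 1 := by
      field_simp [hcdef]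
      rw [hcdef, div_sub_one he.ne', mul_div_assoc', div_eq_one_iff_eq he.ne']; ring
    have hkey : (E - 1) • ((y + c • (x - y)) - x) = x - y := by
      have h4 : (y + c • (x - y)) - x = (c - 1) • (x - y) := by module
      rw [h4, smul_smul, hec, one_smul]
    show x - (E - 1) • ((y + c • (x - y)) - x) = y
    rw [hkey]; module
  · rintro ⟨hy, z, hz, hzy⟩
    refine ⟨hy, (key y hy).mpr ?_⟩
    have h1 : (E - 1) • (z - x) = x - y := by
      have h5 : x - (E - 1) • (z - x) = y := hzy
      rw [← h5]; module
    have hz' : z = y + c • (x - y) := by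
      have h2 : z - x = (E - 1)⁻¹ • (x - y) := by
        rw [← h1, smul_smul, inv_mul_cancel₀ he.ne', one_smul]
      have hc' : c = 1 + (E - 1)⁻¹ := by
        field_simp [hcdef]
        rw [hcdef, div_mul_cancel₀ _ he.ne']; ring
      have h3 : z = x + (E - 1)⁻¹ • (x - y) := by
        rw [← h2]; module
      rw [h3, hc']; module
    rw [← hz']; exact hz
end
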